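/- Let K be a field, A a K-algebra, and E a K-subspace of A such that {a ∈ A : a·E ⊆ E} = K·1 (the image of K in A). Let R be a commutative K-algebra which is free as a K-module. Then in the R-algebra A ⊗_K R, the set {x ∈ A ⊗_K R : x·(E ⊗_K R) ⊆ E ⊗_K R} equals R·1, i.e., the image of R under the structural map R → A ⊗_K R (equivalently, the bottom R-subalgebra of A ⊗_K R). -/

import Mathlib

open TensorProduct

/-- Let `E` be a `K`-subspace of a `K`-algebra `A` such that
`{a ∈ A : a·E ⊆ E} = K·1`. For any commutative `K`-algebra `R` which is free as a
`K`-module, one has `{x ∈ R ⊗[K] A : x·(R ⊗[K] E) ⊆ R ⊗[K] E} = R·1`, the image of `R`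
under the structural map of the `R`-algebra `R ⊗[K] A`. -/
theorem stmt_4 (K : Type*) [Field K] (A : Type*) [Ring A] [Algebra K A]
    (E : Submodule K A)
    (hE : {a : A | ∀ e ∈ E, a * e ∈ E} = Set.range (algebraMap K A))
    (R : Type*) [CommRing R] [Algebra K R] [Module.Free K R] :
    {x : R ⊗[K] A | ∀ e ∈ E.baseChange R, x * e ∈ E.baseChange R} =
      Set.range (algebraMap R (R ⊗[K] A)) := by
  classical
  set ι := Module.Free.ChooseBasisIndex K R with hι
  set b : Module.Basis ι K R := Module.Free.chooseBasis K R with hb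
  set F : R ⊗[K] A ≃ₗ[K] (ι →₀ A) :=
    (TensorProduct.congr b.repr (LinearEquiv.refl K A)).trans
      (TensorProduct.finsuppScalarLeft K A ι) with hFdef
  have hF : ∀ (r : R) (a : A) (i : ι), F (r ⊗ₜ[K] a) i = b.repr r i • a := by
    intro r a i
    simp [hFdef, TensorProduct.finsuppScalarLeft_apply_tmul_apply]
  -- F maps baseChange members into E, coordinatewise
  have hmemE : ∀ y ∈ E.baseChange R, ∀ i, F y i ∈ E := by
    intro y hy i
    have hrange : E.baseChange R ≤ LinearMap.range (E.subtype.baseChange R) := by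
      rw [Submodule.baseChange]
    obtain ⟨z, rfl⟩ := hrange hy
    clear hy
    induction z using TensorProduct.induction_on with
    | zero => simp
    | tmul r e =>
        rw [LinearMap.baseChange_tmul, Submodule.coe_subtype, hF]
        exact E.smul_mem _ e.2
    | add u v hu hv =>
        rw [map_add, map_add, Finsupp.add_apply]
        exact E.add_mem hu hv
  ext x
  constructor
  · intro hx
    -- multiplicativity of coordinates against 1 ⊗ e
    have hmul : ∀ (e : A) (i : ι) (y : R ⊗[K] A),
        F (y * ((1 : R) ⊗ₜ[K] e)) i = F y i * e := by
      intro e i y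
      induction y using TensorProduct.induction_on with
      | zero => simp
      | tmul r a =>
          rw [Algebra.TensorProduct.tmul_mul_tmul, mul_one, hF, hF, smul_mul_assoc]
      | add u v hu hv =>
          rw [add_mul, map_add, map_add, Finsupp.add_apply, Finsupp.add_apply,
            hu, hv, add_mul]
    have hstab : ∀ i, F x i ∈ Set.range (algebraMap K A) := by
      intro i
      rw [← hE]
      intro e he
      have h1 : x * ((1 : R) ⊗ₜ[K] e) ∈ E.baseChange R :=
        hx _ (Submodule.tmul_mem_baseChange_of_mem 1 he)
      have := hmemE _ h1 i
      rwa [hmul e i x] at this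
    have hsel : ∀ i, ∃ k : K, algebraMap K A k = F x i ∧ (F x i = 0 → k = 0) := by
      intro i
      by_cases h : F x i = 0
      · exact ⟨0, by simp [h], fun _ => rfl⟩
      · obtain ⟨k, hk⟩ := hstab i
        exact ⟨k, hk, fun h' => absurd h' h⟩
    choose k hk1 hk2 using hsel
    set c : ι →₀ K := Finsupp.onFinset (F x).support k
      (fun i hi => Finsupp.mem_support_iff.mpr (fun h0 => hi (hk2 i h0))) with hc
    refine ⟨b.repr.symm c, ?_⟩
    have : algebraMap R (R ⊗[K] A) (b.repr.symm c) = (b.repr.symm c) ⊗ₜ[K] 1 :=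
      Algebra.TensorProduct.algebraMap_apply (b.repr.symm c)
    rw [this]
    apply F.injective
    ext i
    rw [hF]
    have hci : b.repr (b.repr.symm c) i = c i := by
      rw [LinearEquiv.apply_symm_apply]
    rw [hci]
    have : (c i : K) • (1 : A) = algebraMap K A (c i) :=
      (Algebra.algebraMap_eq_smul_one (c i)).symm
    rw [this]
    show algebraMap K A (k i) = F x i
    exact hk1 i
  · rintro ⟨r, rfl⟩ e he
    rw [← Algebra.smul_def]
    exact (E.baseChange R).smul_mem r he
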